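/- For complex s with Re(s) > 0 and real τ, the integral ∫₀^∞ cos(τy)/cosh^{2s}(y/2) dy equals 2^{2s-1} Γ(s+iτ)Γ(s−iτ)/Γ(2s). -/

import Mathlib

open Complex Real MeasureTheory Set Filter

/-- Bessel function of the first kind of complex order `ν` at positive real argument `x`. -/
noncomputable def besselJ (ν : ℂ) (x : ℝ) : ℂ :=
  ∑' k : ℕ, ((-1 : ℂ) ^ k / ((k.factorial : ℂ) * Complex.Gamma (ν + k + 1))) *
    ((x : ℂ) / 2) ^ (ν + 2 * (k : ℂ))

/-- Bessel function of the second kind of complex order `ν`. -/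
noncomputable def besselY (ν : ℂ) (x : ℝ) : ℂ :=
  (besselJ ν x * Complex.cos ((π : ℂ) * ν) - besselJ (-ν) x) / Complex.sin ((π : ℂ) * ν)

/-- Modified Bessel function of the first kind of complex order `ν`. -/
noncomputable def besselI (ν : ℂ) (x : ℝ) : ℂ :=
  ∑' k : ℕ, (1 / ((k.factorial : ℂ) * Complex.Gamma (ν + k + 1))) *
    ((x : ℂ) / 2) ^ (ν + 2 * (k : ℂ))

/-- Modified Bessel function of the second kind (Macdonald function). -/
noncomputable def besselK (ν : ℂ) (x : ℝ) : ℂ :=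
  ((π : ℂ) / 2) * (besselI (-ν) x - besselI ν x) / Complex.sin ((π : ℂ) * ν)

/-- Anger function `𝐉_ν(z) = (1/π) ∫₀^π cos (ν θ − z sin θ) dθ`. -/
noncomputable def angerJ (ν : ℂ) (z : ℝ) : ℂ :=
  (1 / (π : ℂ)) * ∫ θ in (0 : ℝ)..π, Complex.cos (ν * (θ : ℂ) - (z : ℂ) * Real.sin θ)

/-- The Weber type kernel away from `τ = 0`. -/
noncomputable def weberW₀ (α x τ : ℝ) : ℝ :=
  (besselJ ((α : ℂ) + τ * I) (Real.sqrt x) * besselY ((α : ℂ) - τ * I) (Real.sqrt x)).im /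
    Real.sinh (π * τ)

/-- The Weber type kernel `W_α(x,τ) = Im[J_{α+iτ}(√x) Y_{α−iτ}(√x)]/sinh(πτ)`,
defined at `τ = 0` by continuity. -/
noncomputable def weberW (α x τ : ℝ) : ℝ :=
  if τ = 0 then limUnder (nhdsWithin 0 {(0 : ℝ)}ᶜ) (weberW₀ α x)
  else weberW₀ α x τ


lemma cpow_ofReal_rpow {p : ℝ} (hp : 0 < p) (t : ℝ) (w : ℂ) :
    ((p ^ t : ℝ) : ℂ) ^ w = (p:ℂ) ^ ((t:ℂ) * w) := by
  rw [Complex.ofReal_cpow hp.le, ← Complex.cpow_mul]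
  · rw [← Complex.ofReal_log hp.le, ← Complex.ofReal_mul]
    simp [Real.pi_pos]
  · rw [← Complex.ofReal_log hp.le, ← Complex.ofReal_mul]
    simp [Real.pi_pos.le]

lemma cosh_log_div {u : ℝ} (hu0 : 0 < u) (hu1 : u < 1) :
    Real.cosh ((Real.log u - Real.log (1-u))/2) = (4*u*(1-u)) ^ (-(1/2) : ℝ) := by
  have h1u : 0 < 1 - u := by linarith
  have ha : Real.sqrt u > 0 := Real.sqrt_pos.mpr hu0
  have hb : Real.sqrt (1-u) > 0 := Real.sqrt_pos.mpr h1u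
  have h2 : Real.exp (Real.log u / 2) = Real.sqrt u := by
    rw [Real.sqrt_eq_rpow, Real.rpow_def_of_pos hu0]; ring_nf
  have h3 : Real.exp (Real.log (1-u) / 2) = Real.sqrt (1-u) := by
    rw [Real.sqrt_eq_rpow, Real.rpow_def_of_pos h1u]; ring_nf
  have hrpow : (4*u*(1-u)) ^ (-(1/2) : ℝ) = 1 / (2 * (Real.sqrt u * Real.sqrt (1-u))) := by
    rw [Real.rpow_neg (by positivity), ← Real.sqrt_eq_rpow, one_div,
      show (4:ℝ)*u*(1-u) = 4*(u*(1-u)) by ring,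
      Real.sqrt_mul (by norm_num : (0:ℝ) ≤ 4), show Real.sqrt 4 = 2 by
        rw [show (4:ℝ) = 2^2 by norm_num, Real.sqrt_sq (by norm_num : (0:ℝ) ≤ 2)],
      Real.sqrt_mul hu0.le]
  rw [hrpow, Real.cosh_eq,
    show (Real.log u - Real.log (1-u))/2 = Real.log u / 2 - Real.log (1-u) / 2 by ring,
    Real.exp_sub, neg_sub, Real.exp_sub, h2, h3]
  have hu : Real.sqrt u ^ 2 = u := Real.sq_sqrt hu0.le
  have hv : Real.sqrt (1-u) ^ 2 = 1 - u := Real.sq_sqrt h1u.le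
  field_simp
  nlinarith [hu, hv]

lemma cos_tau_log {u : ℝ} (hu0 : 0 < u) (hu1 : u < 1) (τ : ℝ) :
    (Real.cos (τ * (Real.log u - Real.log (1-u))) : ℂ)
      = ((u:ℂ)^((τ:ℂ)*I) * ((1-u:ℝ):ℂ)^(-((τ:ℂ)*I))
        + (u:ℂ)^(-((τ:ℂ)*I)) * ((1-u:ℝ):ℂ)^((τ:ℂ)*I))/2 := by
  have h1u : 0 < 1 - u := by linarith
  have hU : (u:ℂ) ≠ 0 := by exact_mod_cast hu0.ne'
  have hV : ((1-u:ℝ):ℂ) ≠ 0 := by exact_mod_cast h1u.ne'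
  have lU : Complex.log u = (Real.log u : ℂ) := (Complex.ofReal_log hu0.le).symm
  have lV : Complex.log ((1-u:ℝ):ℂ) = (Real.log (1-u) : ℂ) := (Complex.ofReal_log h1u.le).symm
  rw [Complex.ofReal_cos, Complex.cos,
    Complex.cpow_def_of_ne_zero hU, Complex.cpow_def_of_ne_zero hU,
    Complex.cpow_def_of_ne_zero hV, Complex.cpow_def_of_ne_zero hV,
    lU, lV, ← Complex.exp_add, ← Complex.exp_add]
  congr 1
  · congr 1
    · push_cast; ring
    · push_cast; ring

lemma key_pointwise (s : ℂ) (τ : ℝ) {u : ℝ} (hu0 : 0 < u) (hu1 : u < 1) :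
    ((1/u + 1/(1-u) : ℝ):ℂ) *
      ((Real.cos (τ * (Real.log u - Real.log (1-u))) : ℂ)
        / ((Real.cosh ((Real.log u - Real.log (1-u))/2) : ℂ)) ^ (2*s))
    = 2 ^ (2*s-1) * ((u:ℂ) ^ (s+τ*I-1) * (1-(u:ℂ)) ^ (s-τ*I-1)
        + (u:ℂ) ^ (s-τ*I-1) * (1-(u:ℂ)) ^ (s+τ*I-1)) := by
  have h1u : 0 < 1 - u := by linarith
  have hU : (u:ℂ) ≠ 0 := by exact_mod_cast hu0.ne'
  have hV : ((1-u:ℝ):ℂ) ≠ 0 := by exact_mod_cast h1u.ne'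
  have hV' : (1 - (u:ℂ)) = ((1-u:ℝ):ℂ) := by push_cast; ring
  -- cosh part
  rw [cosh_log_div hu0 hu1, cpow_ofReal_rpow (by positivity : (0:ℝ) < 4*u*(1-u)),
    show ((-(1/2):ℝ):ℂ) * (2*s) = -s by push_cast; ring, Complex.cpow_neg, div_inv_eq_mul]
  -- cos part
  rw [cos_tau_log hu0 hu1 τ]
  -- decompose (4u(1-u))^s
  have h4 : ((4*u*(1-u):ℝ):ℂ) ^ s = (2:ℂ)^(2*s) * (u:ℂ)^s * ((1-u:ℝ):ℂ)^s := by
    rw [show ((4*u*(1-u):ℝ):ℂ) = ((4*u:ℝ):ℂ) * ((1-u:ℝ):ℂ) by push_cast; ring,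
      Complex.mul_cpow_ofReal_nonneg (by positivity) h1u.le,
      show ((4*u:ℝ):ℂ) = ((4:ℝ):ℂ) * ((u:ℝ):ℂ) by push_cast; ring,
      Complex.mul_cpow_ofReal_nonneg (by norm_num) hu0.le]
    have h24 : ((4:ℝ):ℂ) = (((2:ℝ) ^ (2:ℝ) : ℝ):ℂ) := by norm_num
    rw [h24, cpow_ofReal_rpow (by norm_num : (0:ℝ) < 2)]
    push_cast; ring
  rw [h4]
  -- psi' part
  have hpsi : ((1/u + 1/(1-u) : ℝ):ℂ) = ((u:ℂ) * ((1-u:ℝ):ℂ))⁻¹ := by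
    have : (1/u + 1/(1-u) : ℝ) = (u * (1-u))⁻¹ := by field_simp; ring
    rw [this]; push_cast; ring
  rw [hpsi, hV']
  -- expand cpow exponents
  have eU : ∀ x y : ℂ, (u:ℂ) ^ (x + y) = (u:ℂ)^x * (u:ℂ)^y := fun x y => Complex.cpow_add _ _ hU
  have eV : ∀ x y : ℂ, ((1-u:ℝ):ℂ) ^ (x + y) = ((1-u:ℝ):ℂ)^x * ((1-u:ℝ):ℂ)^y :=
    fun x y => Complex.cpow_add _ _ hV
  rw [show s + (τ:ℂ)*I - 1 = s + ((τ:ℂ)*I + (-1)) by ring,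
    show s - (τ:ℂ)*I - 1 = s + (-((τ:ℂ)*I) + (-1)) by ring,
    eU, eU, eV, eV, eU, eV, eU, eV, Complex.cpow_neg_one, Complex.cpow_neg_one,
    show (2:ℂ)^(2*s-1) = (2:ℂ)^(2*s) / 2 by
      rw [Complex.cpow_sub _ _ (two_ne_zero), Complex.cpow_one]]
  field_simp

theorem stmt0 (s : ℂ) (hs : 0 < s.re) (τ : ℝ) :
    ∫ y in Ioi (0 : ℝ), (Real.cos (τ * y) : ℂ) / ((Real.cosh (y / 2) : ℂ)) ^ (2 * s)
      = 2 ^ (2 * s - 1) * Complex.Gamma (s + τ * I) * Complex.Gamma (s - τ * I) /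
        Complex.Gamma (2 * s) := by
  set a : ℂ := s + τ * I with ha
  set b : ℂ := s - τ * I with hb
  have hare : 0 < a.re := by simp [ha, hs]
  have hbre : 0 < b.re := by simp [hb, hs]
  set A : ℝ → ℂ := fun u => (u:ℂ) ^ (a-1) * (1-(u:ℂ)) ^ (b-1) with hA
  set B : ℝ → ℂ := fun u => (u:ℂ) ^ (b-1) * (1-(u:ℂ)) ^ (a-1) with hB
  set ψ : ℝ → ℝ := fun u => Real.log u - Real.log (1-u) with hψ
  set ψ' : ℝ → ℝ := fun u => 1/u + 1/(1-u) with hψ'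
  -- image
  have himg : ψ '' Ioo (1/2) 1 = Ioi 0 := by
    ext y
    constructor
    · rintro ⟨u, hu, rfl⟩
      obtain ⟨hu0, hu1⟩ := hu
      have : Real.log (1-u) < Real.log u := Real.log_lt_log (by linarith) (by linarith)
      simp only [hψ, mem_Ioi]; linarith
    · intro hy
      have hy0 : (0:ℝ) < y := hy
      set E := Real.exp (-y) with hE
      have hE0 : 0 < E := Real.exp_pos _
      have hE1 : E < 1 := Real.exp_lt_one_iff.mpr (by linarith)
      refine ⟨1/(1+E), ⟨by rw [div_lt_div_iff₀ (by norm_num) (by linarith)]; linarith,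
        by rw [div_lt_one (by linarith)]; linarith⟩, ?_⟩
      have h1u : (1:ℝ) - 1/(1+E) = E/(1+E) := by field_simp; ring
      simp only [hψ, h1u]
      rw [one_div, Real.log_inv, Real.log_div hE0.ne' (by positivity), hE, Real.log_exp]
      ring
  have hinj : InjOn ψ (Ioo (1/2) 1) := by
    apply StrictMonoOn.injOn
    intro x hx y hy hxy
    have h1 : Real.log x < Real.log y := Real.log_lt_log (by linarith [hx.1]) hxy
    have h2 : Real.log (1-y) < Real.log (1-x) := Real.log_lt_log (by linarith [hy.2]) (by linarith)
    simp only [hψ]; linarith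
  have hderiv : ∀ u ∈ Ioo (1/2:ℝ) 1, HasDerivWithinAt ψ (ψ' u) (Ioo (1/2) 1) u := by
    intro u hu
    have hu0 : (0:ℝ) < u := by linarith [hu.1]
    have h1u : (0:ℝ) < 1 - u := by linarith [hu.2]
    have d1 : HasDerivAt Real.log u⁻¹ u := Real.hasDerivAt_log hu0.ne'
    have din : HasDerivAt (fun x : ℝ => 1 - x) (-1) u := by
      simpa using (hasDerivAt_id u).const_sub 1
    have d2 : HasDerivAt (fun x : ℝ => Real.log (1-x)) ((1-u)⁻¹ * (-1)) u :=
      (Real.hasDerivAt_log h1u.ne').comp u din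
    have := d1.sub d2
    apply HasDerivAt.hasDerivWithinAt
    convert this using 1
    · rfl
    simp only [hψ']
    field_simp
    ring
  -- change of variables
  rw [← himg, MeasureTheory.integral_image_eq_integral_abs_deriv_smul measurableSet_Ioo
    hderiv hinj]
  -- rewrite integrand
  have hcongr : ∀ u ∈ Ioo (1/2:ℝ) 1,
      |ψ' u| • ((Real.cos (τ * ψ u) : ℂ) / ((Real.cosh (ψ u / 2) : ℂ)) ^ (2 * s))
        = 2 ^ (2*s-1) * (A u + B u) := by
    intro u hu
    have hu0 : (0:ℝ) < u := by linarith [hu.1]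
    have h1u : (0:ℝ) < 1 - u := by linarith [hu.2]
    have habs : |ψ' u| = ψ' u := abs_of_pos (by simp only [hψ']; positivity)
    rw [habs, Complex.real_smul]
    have := key_pointwise s τ hu0 (hu.2)
    simp only [hψ, hψ'] at this ⊢
    rw [this]
  rw [MeasureTheory.setIntegral_congr_fun measurableSet_Ioo hcongr,
    MeasureTheory.integral_const_mul]
  -- integrability
  have hconv : IntervalIntegrable (fun x : ℝ => (x:ℂ) ^ (a-1) * (1-(x:ℂ)) ^ (b-1))
      volume 0 1 := Complex.betaIntegral_convergent hare hbre
  have hconv' : IntervalIntegrable (fun x : ℝ => (x:ℂ) ^ (b-1) * (1-(x:ℂ)) ^ (a-1))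
      volume 0 1 := Complex.betaIntegral_convergent hbre hare
  have hIA2 : IntegrableOn A (Ioo (1/2) 1) volume := by
    have := (hconv.mono_set (by rw [uIcc_of_le (by norm_num : (1/2:ℝ) ≤ 1),
      uIcc_of_le (by norm_num : (0:ℝ) ≤ 1)]; exact Icc_subset_Icc (by norm_num) le_rfl) :
      IntervalIntegrable A volume (1/2) 1)
    exact ((intervalIntegrable_iff_integrableOn_Ioo_of_le (by norm_num)).mp this)
  have hIB2 : IntegrableOn B (Ioo (1/2) 1) volume := by
    have := (hconv'.mono_set (by rw [uIcc_of_le (by norm_num : (1/2:ℝ) ≤ 1),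
      uIcc_of_le (by norm_num : (0:ℝ) ≤ 1)]; exact Icc_subset_Icc (by norm_num) le_rfl) :
      IntervalIntegrable B volume (1/2) 1)
    exact ((intervalIntegrable_iff_integrableOn_Ioo_of_le (by norm_num)).mp this)
  rw [MeasureTheory.integral_add hIA2 hIB2]
  -- second change of variables: ∫_{(1/2,1)} B = ∫_{(0,1/2)} A
  have hBA : ∫ u in Ioo (1/2:ℝ) 1, B u = ∫ u in Ioo (0:ℝ) (1/2), A u := by
    have himg2 : (fun x : ℝ => 1 - x) '' Ioo (0:ℝ) (1/2) = Ioo (1/2:ℝ) 1 := by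
      rw [Set.image_const_sub_Ioo]; norm_num
    rw [← himg2, MeasureTheory.integral_image_eq_integral_abs_deriv_smul
      (f' := fun _ : ℝ => (-1:ℝ)) measurableSet_Ioo
      (fun x _ => (by simpa using ((hasDerivAt_id x).const_sub 1)
        : HasDerivAt (fun y : ℝ => 1 - y) (-1) x).hasDerivWithinAt)
      (fun x _ y _ h => by simpa using h)]
    apply MeasureTheory.setIntegral_congr_fun measurableSet_Ioo
    intro u hu
    simp only [hB, hA]
    push_cast
    rw [show (1:ℂ) - (1 - (u:ℂ)) = (u:ℂ) by ring]
    simp [Complex.real_smul, mul_comm]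
  rw [hBA, add_comm]
  -- combine to full beta integral
  have hsplit : (∫ u in Ioo (0:ℝ) (1/2), A u) + ∫ u in Ioo (1/2:ℝ) 1, A u
      = Complex.betaIntegral a b := by
    rw [Complex.betaIntegral, ← intervalIntegral.integral_add_adjacent_intervals
      (a := (0:ℝ)) (b := 1/2) (c := 1)
      (hconv.mono_set (by rw [uIcc_of_le (by norm_num : (0:ℝ) ≤ 1/2),
        uIcc_of_le (by norm_num : (0:ℝ) ≤ 1)]; exact Icc_subset_Icc le_rfl (by norm_num)))
      (hconv.mono_set (by rw [uIcc_of_le (by norm_num : (1/2:ℝ) ≤ 1),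
        uIcc_of_le (by norm_num : (0:ℝ) ≤ 1)]; exact Icc_subset_Icc (by norm_num) le_rfl))]
    rw [intervalIntegral.integral_of_le (by norm_num : (0:ℝ) ≤ 1/2),
      intervalIntegral.integral_of_le (by norm_num : (1/2:ℝ) ≤ 1),
      MeasureTheory.integral_Ioc_eq_integral_Ioo, MeasureTheory.integral_Ioc_eq_integral_Ioo]
  rw [hsplit]
  -- beta = Gamma/Gamma
  have hbeta := Complex.Gamma_mul_Gamma_eq_betaIntegral hare hbre
  have hab : a + b = 2 * s := by rw [ha, hb]; ring
  rw [hab] at hbeta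
  have hΓ : Complex.Gamma (2*s) ≠ 0 := Complex.Gamma_ne_zero_of_re_pos (by simp [Complex.mul_re]; linarith)
  rw [ha, hb] at hbeta ⊢
  field_simp at hbeta ⊢
  have key : Complex.Gamma (s * 2) * (Complex.Gamma (s * 2))⁻¹ = 1 :=
    mul_inv_cancel₀ (by rwa [mul_comm])
  linear_combination (-(Complex.Gamma (s * 2))⁻¹) * hbeta - (s + ↑τ * I).betaIntegral (s - ↑τ * I) * key
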